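/- If p is a prime greater than 3 and n, m, n_0, m_0 are nonnegative integers with n_0 < p and m_0 < p, then C(n·p^3 + n_0, m·p^3 + m_0) ≡ C(n, m) · C(n_0, m_0) (mod p^3). -/

import Mathlib

open Finset

-- generic: product of (a j + y) with y^2 = 0
lemma prod_add_nilsq {R : Type*} [CommRing R] (y : R) (hy : y * y = 0)
    (s : Finset ℕ) (a : ℕ → R) :
    ∏ j ∈ s, (a j + y) = ∏ j ∈ s, a j + y * ∑ j ∈ s, ∏ k ∈ s.erase j, a k := by
  classical
  induction s using Finset.induction with
  | empty => simp
  | @insert i s hi ih =>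
    rw [Finset.prod_insert hi, ih, Finset.prod_insert hi, Finset.sum_insert hi,
      Finset.erase_insert hi]
    have h1 : ∀ j ∈ s, ∏ k ∈ (insert i s).erase j, a k = a i * ∏ k ∈ s.erase j, a k := by
      intro j hj
      rw [Finset.erase_insert_of_ne (by rintro rfl; exact hi hj),
        Finset.prod_insert (by simp [hi, Finset.mem_erase])]
    rw [Finset.sum_congr rfl h1, ← Finset.mul_sum]
    linear_combination (∑ j ∈ s, ∏ k ∈ s.erase j, a k) * hy


lemma two_ne_zero_zmod (p : ℕ) [Fact p.Prime] (h3 : 3 < p) : (2 : ZMod p) ≠ 0 := by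
  intro h
  have := (ZMod.natCast_eq_zero_iff 2 p).mp (by exact_mod_cast h)
  have := Nat.le_of_dvd (by norm_num) this
  omega

lemma three_ne_zero_zmod (p : ℕ) [Fact p.Prime] (h3 : 3 < p) : (3 : ZMod p) ≠ 0 := by
  intro h
  have := (ZMod.natCast_eq_zero_iff 3 p).mp (by exact_mod_cast h)
  have := Nat.le_of_dvd (by norm_num) this
  omega

lemma sum_sq_zmod (p : ℕ) [Fact p.Prime] (h3 : 3 < p) :
    ∑ x : ZMod p, x ^ 2 = 0 := by
  have h2 := two_ne_zero_zmod p h3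
  have key : ∑ x : ZMod p, (2 * x) ^ 2 = ∑ x : ZMod p, x ^ 2 :=
    Equiv.sum_comp (Equiv.mulLeft₀ 2 h2) (fun x => x ^ 2)
  have : (3 : ZMod p) * ∑ x : ZMod p, x ^ 2 = 0 := by
    have : ∑ x : ZMod p, (2 * x) ^ 2 = 4 * ∑ x : ZMod p, x ^ 2 := by
      rw [Finset.mul_sum]; congr 1; ext x; ring
    rw [this] at key
    linear_combination key
  exact (mul_eq_zero.mp this).resolve_left (three_ne_zero_zmod p h3)

lemma sum_inv_sq_zmod (p : ℕ) [Fact p.Prime] (h3 : 3 < p) :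
    ∑ x : ZMod p, (x⁻¹) ^ 2 = 0 := by
  have : ∑ x : ZMod p, (x⁻¹) ^ 2 = ∑ x : ZMod p, x ^ 2 :=
    Equiv.sum_comp (Function.Involutive.toPerm _ (inv_involutive)) (fun x => x ^ 2)
  rw [this]; exact sum_sq_zmod p h3

lemma sum_inv_sq_Ico (p : ℕ) [Fact p.Prime] (h3 : 3 < p) :
    ∑ j ∈ Finset.Ico 1 p, ((j : ZMod p)⁻¹) ^ 2 = 0 := by
  have h0 : 0 < p := by omega
  have h1 : ∑ j ∈ Finset.range p, ((j : ZMod p)⁻¹) ^ 2 = ∑ x : ZMod p, (x⁻¹) ^ 2 := by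
    haveI : NeZero p := ⟨by omega⟩
    refine Finset.sum_nbij' (fun j : ℕ => (j : ZMod p)) (fun x : ZMod p => x.val)
      (fun a _ => Finset.mem_univ _) (fun a _ => Finset.mem_range.mpr (ZMod.val_lt a))
      (fun a ha => ZMod.val_cast_of_lt (Finset.mem_range.mp ha))
      (fun a _ => ZMod.natCast_rightInverse a) (fun a _ => rfl)
  have h2 : ∑ j ∈ Finset.range p, ((j : ZMod p)⁻¹) ^ 2
      = ∑ j ∈ Finset.Ico 1 p, ((j : ZMod p)⁻¹) ^ 2 := by
    rw [Finset.range_eq_Ico, Finset.sum_eq_sum_Ico_succ_bot h0]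
    simp
  rw [← h2, h1]
  exact sum_inv_sq_zmod p h3

lemma sum_inv_sq_half (p : ℕ) [Fact p.Prime] (h3 : 3 < p) :
    ∑ j ∈ Finset.Ico 1 ((p - 1) / 2 + 1), ((j : ZMod p)⁻¹) ^ 2 = 0 := by
  have hodd : p % 2 = 1 := by
    rcases (Fact.out : p.Prime).eq_two_or_odd with h | h
    · omega
    · exact h
  set m := (p - 1) / 2 with hm
  have hp2 : p = 2 * m + 1 := by omega
  have hsplit : ∑ j ∈ Finset.Ico 1 p, ((j : ZMod p)⁻¹) ^ 2
      = ∑ j ∈ Finset.Ico 1 (m + 1), ((j : ZMod p)⁻¹) ^ 2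
        + ∑ j ∈ Finset.Ico (m + 1) p, ((j : ZMod p)⁻¹) ^ 2 :=
    (Finset.sum_Ico_consecutive _ (by omega) (by omega)).symm
  have hrefl : ∑ j ∈ Finset.Ico (m + 1) p, ((j : ZMod p)⁻¹) ^ 2
      = ∑ j ∈ Finset.Ico 1 (m + 1), ((j : ZMod p)⁻¹) ^ 2 := by
    refine Finset.sum_nbij' (fun j => p - j) (fun j => p - j) ?_ ?_ ?_ ?_ ?_
    · intro a ha; simp only [Finset.mem_Ico] at *; omega
    · intro a ha; simp only [Finset.mem_Ico] at *; omega
    · intro a ha; simp only [Finset.mem_Ico] at ha; show p - (p - a) = a; omega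
    · intro a ha; simp only [Finset.mem_Ico] at ha; show p - (p - a) = a; omega
    · intro a ha
      simp only [Finset.mem_Ico] at ha
      have : ((p - a : ℕ) : ZMod p) = -(a : ZMod p) := by
        have : ((p - a : ℕ) : ZMod p) = (p : ZMod p) - (a : ZMod p) :=
          Nat.cast_sub (by omega)
        rw [this, ZMod.natCast_self, zero_sub]
      rw [this, inv_neg, neg_pow]
      ring
  have h2 : (2 : ZMod p) ≠ 0 := two_ne_zero_zmod p h3
  have := sum_inv_sq_Ico p h3
  rw [hsplit, hrefl] at this
  have h22 : (2 : ZMod p) * ∑ j ∈ Finset.Ico 1 (m + 1), ((j : ZMod p)⁻¹) ^ 2 = 0 := by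
    linear_combination this
  exact (mul_eq_zero.mp h22).resolve_left h2

lemma prod_block (p : ℕ) [Fact p.Prime] (h3 : 3 < p) (i : ℕ) :
    (∏ j ∈ Finset.Ico 1 p, (i * p + j)) ≡ (p - 1).factorial [MOD p ^ 3] := by
  classical
  have hp : p.Prime := Fact.out
  have hodd : p % 2 = 1 := by
    rcases hp.eq_two_or_odd with h | h
    · omega
    · exact h
  set m := (p - 1) / 2 with hm
  have hp2 : p = 2 * m + 1 := by omega
  have hm1p : m + 1 ≤ p := by omega
  have h1m1 : (1 : ℕ) ≤ m + 1 := by omega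
  -- the natural number T and its divisibility by p
  set T : ℕ := ∑ j ∈ Finset.Ico 1 (m + 1),
      ∏ k ∈ (Finset.Ico 1 (m + 1)).erase j, (k * (p - k)) with hT
  have hcastneg : ∀ k ∈ Finset.Ico 1 (m + 1),
      ((k * (p - k) : ℕ) : ZMod p) = -(k : ZMod p) ^ 2 := by
    intro k hk
    simp only [Finset.mem_Ico] at hk
    have h1 : ((p - k : ℕ) : ZMod p) = -(k : ZMod p) := by
      rw [Nat.cast_sub (by omega), ZMod.natCast_self, zero_sub]
    rw [Nat.cast_mul, h1]
    ring
  have hjne : ∀ j ∈ Finset.Ico 1 (m + 1), (-(j : ZMod p) ^ 2) ≠ 0 := by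
    intro j hj
    simp only [Finset.mem_Ico] at hj
    have hj0 : (j : ZMod p) ≠ 0 := by
      rw [Ne, ZMod.natCast_eq_zero_iff]
      intro hd
      have := Nat.le_of_dvd (by omega) hd
      omega
    simp [hj0]
  have hdvdT : p ∣ T := by
    rw [← ZMod.natCast_eq_zero_iff, hT, Nat.cast_sum]
    have step1 : ∀ j ∈ Finset.Ico 1 (m + 1),
        ((∏ k ∈ (Finset.Ico 1 (m + 1)).erase j, (k * (p - k)) : ℕ) : ZMod p)
        = (∏ k ∈ Finset.Ico 1 (m + 1), (-(k : ZMod p) ^ 2)) * (-((j : ZMod p)⁻¹) ^ 2) := by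
      intro j hj
      rw [Nat.cast_prod]
      rw [Finset.prod_congr rfl (fun k hk => hcastneg k (Finset.mem_of_mem_erase hk))]
      have e2 := Finset.prod_erase_mul (Finset.Ico 1 (m + 1))
        (fun k => -(k : ZMod p) ^ 2) hj
      have hj0 := hjne j hj
      have e3 : ∏ k ∈ (Finset.Ico 1 (m + 1)).erase j, (-(k : ZMod p) ^ 2)
          = (∏ k ∈ Finset.Ico 1 (m + 1), (-(k : ZMod p) ^ 2)) * (-(j : ZMod p) ^ 2)⁻¹ := by
        rw [eq_mul_inv_iff_mul_eq₀ hj0]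
        exact e2
      rw [e3]
      congr 1
      rw [inv_neg, ← inv_pow]
    rw [Finset.sum_congr rfl step1, ← Finset.mul_sum]
    have : ∑ j ∈ Finset.Ico 1 (m + 1), (-((j : ZMod p)⁻¹) ^ 2)
        = -∑ j ∈ Finset.Ico 1 (m + 1), ((j : ZMod p)⁻¹) ^ 2 := by
      simp
    rw [this, sum_inv_sq_half p h3]
    simp
  -- now the computation modulo p ^ 3
  rw [← ZMod.natCast_eq_natCast_iff]
  set R := ZMod (p ^ 3) with hR
  set c : ℕ := i ^ 2 + i with hc
  set y : R := ((p ^ 2 * c : ℕ) : R) with hy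
  set a : ℕ → R := (fun j => ((j * (p - j) : ℕ) : R)) with ha
  set f : ℕ → R := (fun j => ((i * p + j : ℕ) : R)) with hf
  have hynil : y * y = 0 := by
    rw [hy, ← Nat.cast_mul, ZMod.natCast_eq_zero_iff]
    exact ⟨p * c ^ 2, by ring⟩
  have hcast1 : ((∏ j ∈ Finset.Ico 1 p, (i * p + j) : ℕ) : R)
      = ∏ j ∈ Finset.Ico 1 p, f j := by
    rw [Nat.cast_prod]
  rw [hcast1]
  have h1 : ∏ j ∈ Finset.Ico 1 p, f j
      = (∏ j ∈ Finset.Ico 1 (m + 1), f j) * ∏ j ∈ Finset.Ico (m + 1) p, f j :=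
    (Finset.prod_Ico_consecutive f h1m1 hm1p).symm
  have h2 : ∏ j ∈ Finset.Ico (m + 1) p, f j
      = ∏ j ∈ Finset.Ico 1 (m + 1), f (p - j) := by
    refine Finset.prod_nbij' (fun j => p - j) (fun j => p - j) ?_ ?_ ?_ ?_ ?_
    · intro x hx; simp only [Finset.mem_Ico] at *; omega
    · intro x hx; simp only [Finset.mem_Ico] at *; omega
    · intro x hx; simp only [Finset.mem_Ico] at hx; show p - (p - x) = x; omega
    · intro x hx; simp only [Finset.mem_Ico] at hx; show p - (p - x) = x; omega
    · intro x hx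
      simp only [Finset.mem_Ico] at hx
      show f x = f (p - (p - x))
      congr 1
      omega
  have h4 : ∀ j ∈ Finset.Ico 1 (m + 1), f j * f (p - j) = a j + y := by
    intro j hj
    simp only [Finset.mem_Ico] at hj
    have hnat : (i * p + j) * (i * p + (p - j)) = j * (p - j) + p ^ 2 * c := by
      zify [show j ≤ p by omega, hc]
      ring
    rw [hf, ha, hy]
    simp only []
    rw [← Nat.cast_mul, hnat, Nat.cast_add]
  have h5 := prod_add_nilsq y hynil (Finset.Ico 1 (m + 1)) a
  have h6 : ∏ j ∈ Finset.Ico 1 (m + 1), a j = ((p - 1).factorial : R) := by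
    have hnatprod : ∏ j ∈ Finset.Ico 1 (m + 1), (j * (p - j)) = (p - 1).factorial := by
      rw [Finset.prod_mul_distrib]
      have e1 : ∏ j ∈ Finset.Ico 1 (m + 1), (p - j) = ∏ j ∈ Finset.Ico (m + 1) p, j := by
        refine (Finset.prod_nbij' (fun j => p - j) (fun j => p - j) ?_ ?_ ?_ ?_ ?_).symm
        · intro x hx; simp only [Finset.mem_Ico] at *; omega
        · intro x hx; simp only [Finset.mem_Ico] at *; omega
        · intro x hx; simp only [Finset.mem_Ico] at hx; show p - (p - x) = x; omega
        · intro x hx; simp only [Finset.mem_Ico] at hx; show p - (p - x) = x; omega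
        · intro x hx; simp only [Finset.mem_Ico] at hx; show x = p - (p - x); omega
      rw [e1]
      rw [Finset.prod_Ico_consecutive (fun j => j) h1m1 hm1p]
      rw [show p = (p - 1) + 1 by omega]
      exact Finset.prod_Ico_id_eq_factorial (p - 1)
    rw [ha]
    simp only []
    rw [← Nat.cast_prod, hnatprod]
  have h7 : y * ∑ j ∈ Finset.Ico 1 (m + 1), ∏ k ∈ (Finset.Ico 1 (m + 1)).erase j, a k
      = 0 := by
    have hTc : ∑ j ∈ Finset.Ico 1 (m + 1), ∏ k ∈ (Finset.Ico 1 (m + 1)).erase j, a k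
        = ((T : ℕ) : R) := by
      rw [hT, Nat.cast_sum]
      refine Finset.sum_congr rfl (fun j hj => ?_)
      rw [Nat.cast_prod]
    rw [hTc, hy, ← Nat.cast_mul]
    obtain ⟨t, ht⟩ := hdvdT
    rw [ZMod.natCast_eq_zero_iff]
    exact ⟨c * t, by rw [ht]; ring⟩
  calc ∏ j ∈ Finset.Ico 1 p, f j
      = ∏ j ∈ Finset.Ico 1 (m + 1), (a j + y) := by
        rw [h1, h2, ← Finset.prod_mul_distrib]
        exact Finset.prod_congr rfl h4
    _ = ((p - 1).factorial : R) := by rw [h5, h6, h7, add_zero]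


lemma factorial_add_prod (N k : ℕ) :
    (N + k).factorial = N.factorial * ∏ j ∈ Finset.Ico 1 (k + 1), (N + j) := by
  induction k with
  | zero => simp
  | succ k ih =>
    have htop : ∏ j ∈ Finset.Ico 1 (k + 1 + 1), (N + j)
        = (∏ j ∈ Finset.Ico 1 (k + 1), (N + j)) * (N + (k + 1)) :=
      Finset.prod_Ico_succ_top (by omega) _
    rw [show N + (k + 1) = (N + k) + 1 by omega, Nat.factorial_succ, ih, htop]
    ring

lemma factorial_mul_pow (p : ℕ) (hp : 0 < p) (a : ℕ) :
    (a * p).factorial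
      = a.factorial * p ^ a * ∏ i ∈ Finset.range a, ∏ j ∈ Finset.Ico 1 p, (i * p + j) := by
  induction a with
  | zero => simp
  | succ a ih =>
    rw [show (a + 1) * p = a * p + p by ring, factorial_add_prod, ih,
      Finset.prod_range_succ, Nat.factorial_succ,
      show p = (p - 1) + 1 by omega, Finset.prod_Ico_succ_top (by omega)]
    rw [show (p - 1) + 1 = p by omega]
    rw [show a * p + p = (a + 1) * p by ring]
    ring

lemma prod_blocks_modeq (p : ℕ) [Fact p.Prime] (h3 : 3 < p) (a : ℕ) :
    (∏ i ∈ Finset.range a, ∏ j ∈ Finset.Ico 1 p, (i * p + j))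
      ≡ (p - 1).factorial ^ a [MOD p ^ 3] := by
  induction a with
  | zero => simp; rfl
  | succ a ih =>
    rw [Finset.prod_range_succ, pow_succ]
    exact ih.mul (prod_block p h3 a)

lemma choose_mul_p (p : ℕ) [Fact p.Prime] (h3 : 3 < p) (a b : ℕ) :
    Nat.choose (a * p) (b * p) ≡ Nat.choose a b [MOD p ^ 3] := by
  have hp : p.Prime := Fact.out
  have hp0 : 0 < p := by omega
  rcases le_or_gt b a with hba | hba
  · -- key exact identity
    set F : ℕ → ℕ := fun x => ∏ i ∈ Finset.range x, ∏ j ∈ Finset.Ico 1 p, (i * p + j) with hF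
    have key : Nat.choose (a * p) (b * p) * (F b * F (a - b)) = Nat.choose a b * F a := by
      have h1 : Nat.choose (a * p) (b * p) * (b * p).factorial * ((a * p - b * p)).factorial
          = (a * p).factorial := Nat.choose_mul_factorial_mul_factorial (by exact Nat.mul_le_mul_right p hba)
      have hsub : a * p - b * p = (a - b) * p := by rw [Nat.sub_mul]
      rw [hsub] at h1
      rw [factorial_mul_pow p hp0 a, factorial_mul_pow p hp0 b,
        factorial_mul_pow p hp0 (a - b)] at h1
      have h2 : Nat.choose a b * b.factorial * (a - b).factorial = a.factorial :=
        Nat.choose_mul_factorial_mul_factorial hba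
      have hppos : 0 < b.factorial * (a - b).factorial * p ^ a :=
        Nat.mul_pos (Nat.mul_pos b.factorial_pos (a - b).factorial_pos) (Nat.pow_pos hp0)
      apply Nat.eq_of_mul_eq_mul_left hppos
      calc b.factorial * (a - b).factorial * p ^ a
            * (Nat.choose (a * p) (b * p) * (F b * F (a - b)))
          = Nat.choose (a * p) (b * p) * (b.factorial * p ^ b * F b)
            * ((a - b).factorial * p ^ (a - b) * F (a - b)) := by
            rw [show p ^ a = p ^ b * p ^ (a - b) by rw [← pow_add]; congr 1; omega]
            ring
        _ = a.factorial * p ^ a * F a := h1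
        _ = Nat.choose a b * b.factorial * (a - b).factorial * p ^ a * F a := by rw [h2]
        _ = b.factorial * (a - b).factorial * p ^ a * (Nat.choose a b * F a) := by ring
    have hW : Nat.Coprime (p ^ 3) ((p - 1).factorial ^ a) := by
      apply Nat.Coprime.pow
      exact (Nat.Prime.coprime_iff_not_dvd hp).mpr (by rw [hp.dvd_factorial]; omega)
    set W := (p - 1).factorial with hWdef
    have m1 : Nat.choose (a * p) (b * p) * (F b * F (a - b))
        ≡ Nat.choose (a * p) (b * p) * W ^ a [MOD p ^ 3] := by
      have := (prod_blocks_modeq p h3 b).mul (prod_blocks_modeq p h3 (a - b))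
      rw [← pow_add, show b + (a - b) = a by omega] at this
      exact Nat.ModEq.mul_left _ this
    have m2 : Nat.choose a b * F a ≡ Nat.choose a b * W ^ a [MOD p ^ 3] :=
      Nat.ModEq.mul_left _ (prod_blocks_modeq p h3 a)
    have m3 : Nat.choose (a * p) (b * p) * W ^ a ≡ Nat.choose a b * W ^ a [MOD p ^ 3] :=
      (m1.symm.trans (key ▸ m2 : Nat.choose (a * p) (b * p) * (F b * F (a - b))
          ≡ Nat.choose a b * W ^ a [MOD p ^ 3]))
    exact Nat.ModEq.cancel_right_of_coprime hW m3
  · have h1 : Nat.choose (a * p) (b * p) = 0 :=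
      Nat.choose_eq_zero_of_lt (by exact (Nat.mul_lt_mul_right hp0).mpr hba)
    have h2 : Nat.choose a b = 0 := Nat.choose_eq_zero_of_lt hba
    rw [h1, h2]

lemma choose_p3_modeq (p : ℕ) [Fact p.Prime] (h3 : 3 < p) (a b : ℕ) :
    Nat.choose (a * p ^ 3) (b * p ^ 3) ≡ Nat.choose a b [MOD p ^ 3] := by
  have e1 : a * p ^ 3 = a * p ^ 2 * p := by ring
  have e2 : b * p ^ 3 = b * p ^ 2 * p := by ring
  have e3 : a * p ^ 2 = a * p * p := by ring
  have e4 : b * p ^ 2 = b * p * p := by ring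
  rw [e1, e2]
  refine (choose_mul_p p h3 _ _).trans ?_
  rw [e3, e4]
  refine (choose_mul_p p h3 _ _).trans ?_
  exact choose_mul_p p h3 a b

lemma dvd_choose_not_dvd (p : ℕ) (hp : p.Prime) (n i : ℕ) (hi : ¬ p ∣ i) :
    p ^ 3 ∣ Nat.choose (n * p ^ 3) i := by
  rcases Nat.eq_zero_or_pos i with rfl | hi0
  · exact absurd (dvd_zero p) hi
  rcases Nat.eq_zero_or_pos n with rfl | hn0
  · simp only [Nat.zero_mul]
    rw [Nat.choose_eq_zero_of_lt hi0]
    exact dvd_zero _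
  have hN : 0 < n * p ^ 3 := Nat.mul_pos hn0 (Nat.pow_pos hp.pos)
  obtain ⟨M, hM⟩ : ∃ M, n * p ^ 3 = M + 1 := ⟨n * p ^ 3 - 1, by omega⟩
  obtain ⟨k, hk⟩ : ∃ k, i = k + 1 := ⟨i - 1, by omega⟩
  have key : Nat.choose (n * p ^ 3) i * i = n * p ^ 3 * Nat.choose M k := by
    rw [hM, hk]
    exact (Nat.add_one_mul_choose_eq M k).symm
  have hdvd : p ^ 3 ∣ Nat.choose (n * p ^ 3) i * i :=
    key ▸ Dvd.dvd.mul_right ⟨n, by ring⟩ _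
  have hcop : Nat.Coprime (p ^ 3) i :=
    Nat.Coprime.pow_left 3 ((Nat.Prime.coprime_iff_not_dvd hp).mpr hi)
  exact (Nat.Coprime.dvd_of_dvd_mul_right hcop hdvd)

theorem bailey_1990_cube (p : ℕ) (hp : p.Prime) (h3 : 3 < p) (n m n₀ m₀ : ℕ)
    (hn₀ : n₀ < p) (hm₀ : m₀ < p) :
    Nat.choose (n * p ^ 3 + n₀) (m * p ^ 3 + m₀) ≡
      Nat.choose n m * Nat.choose n₀ m₀ [MOD p ^ 3] := by
  haveI : Fact p.Prime := ⟨hp⟩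
  have stepA : Nat.choose (n * p ^ 3 + n₀) (m * p ^ 3 + m₀) ≡
      Nat.choose (n * p ^ 3) (m * p ^ 3) * Nat.choose n₀ m₀ [MOD p ^ 3] := by
    rw [← ZMod.natCast_eq_natCast_iff, Nat.add_choose_eq, Nat.cast_sum]
    have hmem : ((m * p ^ 3, m₀) : ℕ × ℕ) ∈ Finset.HasAntidiagonal.antidiagonal (m * p ^ 3 + m₀) :=
      Finset.HasAntidiagonal.mem_antidiagonal.mpr rfl
    have hzero : ∀ ij ∈ Finset.HasAntidiagonal.antidiagonal (m * p ^ 3 + m₀), ij ≠ ((m * p ^ 3, m₀) : ℕ × ℕ) →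
        ((Nat.choose (n * p ^ 3) ij.1 * Nat.choose n₀ ij.2 : ℕ) : ZMod (p ^ 3)) = 0 := by
      intro ij hij hne
      have hsum := Finset.HasAntidiagonal.mem_antidiagonal.mp hij
      rcases le_or_gt ij.2 n₀ with hj | hj
      · have hpi : ¬ p ∣ ij.1 := by
          intro hdvd
          have h1 : ij.1 ≡ 0 [MOD p] := Nat.modEq_zero_iff_dvd.mpr hdvd
          have h2 : m * p ^ 3 ≡ 0 [MOD p] :=
            Nat.modEq_zero_iff_dvd.mpr ⟨m * p ^ 2, by ring⟩
          have h3' : ij.2 ≡ m₀ [MOD p] := by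
            calc ij.2 ≡ 0 + ij.2 [MOD p] := by rw [Nat.zero_add]
              _ ≡ ij.1 + ij.2 [MOD p] := (h1.add_right ij.2).symm
              _ = m * p ^ 3 + m₀ := hsum
              _ ≡ 0 + m₀ [MOD p] := h2.add_right m₀
              _ = m₀ := by rw [Nat.zero_add]
          have hj2 : ij.2 = m₀ := by
            have := h3'
            unfold Nat.ModEq at this
            rw [Nat.mod_eq_of_lt hm₀, Nat.mod_eq_of_lt (by omega : ij.2 < p)] at this
            exact this
          apply hne
          have hj1 : ij.1 = m * p ^ 3 := by omega
          exact Prod.ext hj1 hj2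
        have hdv := dvd_choose_not_dvd p hp n ij.1 hpi
        rw [Nat.cast_mul, (ZMod.natCast_eq_zero_iff _ _).mpr hdv, zero_mul]
      · rw [Nat.choose_eq_zero_of_lt hj, Nat.mul_zero, Nat.cast_zero]
    exact Finset.sum_eq_single_of_mem _ hmem hzero
  exact stepA.trans ((choose_p3_modeq p h3 n m).mul_right _)
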